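/- Let g be a (right) Leibniz algebra over a field k of characteristic zero. For every n ≥ 1, every t ≥ 2, every X ∈ g^{⊗n} and every Y ∈ L_t, the Leibniz differential satisfies d_{n+t}(X⊗Y) = (d_n X)⊗Y + (−1)^n X⊗(d_t Y). -/

import Mathlib

open scoped TensorProduct

/-- The pure tensor `x 0 ⊗ x 1 ⊗ ... ⊗ x (n-1)`, viewed inside the tensor algebra
`T(g) = ⊕ₙ g^{⊗n}`. -/
noncomputable def pt (k : Type*) [CommSemiring k] {g : Type*} [AddCommMonoid g] [Module k g]
    {n : ℕ} (x : Fin n → g) : TensorAlgebra k g :=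
  (List.ofFn fun i => TensorAlgebra.ι k (x i)).prod

/-- The degree-`n` component `g^{⊗n}` of the tensor algebra: the span of the pure tensors of
length `n`. -/
noncomputable def tensorGrade (k : Type*) [CommSemiring k] (g : Type*) [AddCommMonoid g]
    [Module k g] (n : ℕ) : Submodule k (TensorAlgebra k g) :=
  Submodule.span k {z | ∃ x : Fin n → g, z = pt k x}

set_option linter.unusedSectionVars false
set_option linter.unusedVariables false

section Part1
open scoped TensorProduct
namespace LeibnizAux

variable {k : Type*} [CommRing k] {g : Type*} [AddCommGroup g] [Module k g]

/-- grade involution -/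
noncomputable def grev : TensorAlgebra k g →ₐ[k] TensorAlgebra k g :=
  TensorAlgebra.lift k (-(TensorAlgebra.ι k (M := g)))

@[simp] lemma grev_ι (v : g) : grev (TensorAlgebra.ι k v) = -TensorAlgebra.ι k v := by
  simp [grev]

noncomputable instance instSMulL :
    SMul (TensorAlgebra k g) (g ⊗[k] TensorAlgebra k g) :=
  ⟨fun u m => LinearMap.lTensor g (LinearMap.mulLeft k (grev u)) m⟩

lemma smulL_def (u : TensorAlgebra k g) (m : g ⊗[k] TensorAlgebra k g) :
    u • m = LinearMap.lTensor g (LinearMap.mulLeft k (grev u)) m := rfl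

@[simp] lemma smulL_tmul (u : TensorAlgebra k g) (w : g) (m : TensorAlgebra k g) :
    u • (w ⊗ₜ[k] m) = w ⊗ₜ[k] (grev u * m) := rfl

noncomputable instance instModL :
    Module (TensorAlgebra k g) (g ⊗[k] TensorAlgebra k g) where
  one_smul m := by rw [smulL_def]; simp [LinearMap.mulLeft_one]
  mul_smul u v m := by
    rw [smulL_def, smulL_def, smulL_def, map_mul, LinearMap.mulLeft_mul,
      LinearMap.lTensor_comp]
    rfl
  smul_zero u := by rw [smulL_def]; simp
  smul_add u m₁ m₂ := by simp only [smulL_def]; rw [map_add]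
  add_smul u v m := by
    simp only [smulL_def, map_add]
    rw [show LinearMap.mulLeft k (grev u + grev v)
        = LinearMap.mulLeft k (grev u) + LinearMap.mulLeft k (grev v) from
      LinearMap.ext fun a => add_mul _ _ _, LinearMap.lTensor_add]
    rfl
  zero_smul m := by
    rw [smulL_def, map_zero]
    rw [show LinearMap.mulLeft k (0 : TensorAlgebra k g) = 0 from
      LinearMap.ext fun a => zero_mul _, LinearMap.lTensor_zero]
    rfl

noncomputable instance instSMulR :
    SMul (TensorAlgebra k g)ᵐᵒᵖ (g ⊗[k] TensorAlgebra k g) :=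
  ⟨fun u m => LinearMap.lTensor g (LinearMap.mulRight k u.unop) m⟩

lemma smulR_def (u : (TensorAlgebra k g)ᵐᵒᵖ) (m : g ⊗[k] TensorAlgebra k g) :
    u • m = LinearMap.lTensor g (LinearMap.mulRight k u.unop) m := rfl

@[simp] lemma smulR_tmul (u : TensorAlgebra k g) (w : g) (m : TensorAlgebra k g) :
    (MulOpposite.op u) • (w ⊗ₜ[k] m) = w ⊗ₜ[k] (m * u) := rfl

noncomputable instance instModR :
    Module (TensorAlgebra k g)ᵐᵒᵖ (g ⊗[k] TensorAlgebra k g) where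
  one_smul m := by rw [smulR_def]; simp [LinearMap.mulRight_one]
  mul_smul u v m := by
    rw [smulR_def, smulR_def, smulR_def]
    have : (u * v).unop = v.unop * u.unop := rfl
    rw [this, LinearMap.mulRight_mul, LinearMap.lTensor_comp]
    rfl
  smul_zero u := by rw [smulR_def]; simp
  smul_add u m₁ m₂ := by simp only [smulR_def]; rw [map_add]
  add_smul u v m := by
    simp only [smulR_def]
    have : (u + v).unop = u.unop + v.unop := rfl
    rw [this, show LinearMap.mulRight k (u.unop + v.unop)
        = LinearMap.mulRight k u.unop + LinearMap.mulRight k v.unop from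
      LinearMap.ext fun a => mul_add _ _ _, LinearMap.lTensor_add]
    rfl
  zero_smul m := by
    rw [smulR_def]
    have : (0 : (TensorAlgebra k g)ᵐᵒᵖ).unop = 0 := rfl
    rw [this, show LinearMap.mulRight k (0 : TensorAlgebra k g) = 0 from
      LinearMap.ext fun a => mul_zero _, LinearMap.lTensor_zero]
    rfl

instance instSMulComm :
    SMulCommClass (TensorAlgebra k g) (TensorAlgebra k g)ᵐᵒᵖ (g ⊗[k] TensorAlgebra k g) := by
  constructor
  intro u v m
  rw [smulL_def, smulR_def, smulL_def, smulR_def, ← LinearMap.comp_apply,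
    ← LinearMap.comp_apply, ← LinearMap.lTensor_comp, ← LinearMap.lTensor_comp]
  have : (LinearMap.mulLeft k (grev u)).comp (LinearMap.mulRight k v.unop)
      = (LinearMap.mulRight k v.unop).comp (LinearMap.mulLeft k (grev u)) :=
    LinearMap.ext fun a => (mul_assoc _ _ _).symm
  rw [this]

instance instTowerL : IsScalarTower k (TensorAlgebra k g) (g ⊗[k] TensorAlgebra k g) := by
  constructor
  intro c u m
  rw [smulL_def, smulL_def, map_smul]
  rw [show LinearMap.mulLeft k (c • grev u) = c • LinearMap.mulLeft k (grev u) from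
    LinearMap.ext fun a => smul_mul_assoc c _ a, LinearMap.lTensor_smul]
  rfl

instance instTowerR : IsScalarTower k (TensorAlgebra k g)ᵐᵒᵖ (g ⊗[k] TensorAlgebra k g) := by
  constructor
  intro c u m
  rw [smulR_def, smulR_def]
  have : (c • u).unop = c • u.unop := rfl
  rw [this, show LinearMap.mulRight k (c • u.unop) = c • LinearMap.mulRight k u.unop from
    LinearMap.ext fun a => mul_smul_comm c a _, LinearMap.lTensor_smul]
  rfl

noncomputable def fB : g →ₗ[k] TrivSqZeroExt (TensorAlgebra k g) (g ⊗[k] TensorAlgebra k g) where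
  toFun v := ⟨TensorAlgebra.ι k v, v ⊗ₜ[k] 1⟩
  map_add' v w := by
    ext
    · show TensorAlgebra.ι k (v + w) = TensorAlgebra.ι k v + TensorAlgebra.ι k w
      rw [map_add]
    · show (v + w) ⊗ₜ[k] (1 : TensorAlgebra k g) = v ⊗ₜ[k] 1 + w ⊗ₜ[k] 1
      rw [TensorProduct.add_tmul]
  map_smul' c v := by
    ext
    · show TensorAlgebra.ι k (c • v) = c • TensorAlgebra.ι k v
      rw [map_smul]
    · show (c • v) ⊗ₜ[k] (1 : TensorAlgebra k g) = c • (v ⊗ₜ[k] (1 : TensorAlgebra k g))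
      rw [TensorProduct.smul_tmul']

noncomputable def FB : TensorAlgebra k g →ₐ[k]
    TrivSqZeroExt (TensorAlgebra k g) (g ⊗[k] TensorAlgebra k g) :=
  TensorAlgebra.lift k fB

@[simp] lemma FB_ι (v : g) : FB (TensorAlgebra.ι k v)
    = (⟨TensorAlgebra.ι k v, v ⊗ₜ[k] 1⟩ :
        TrivSqZeroExt (TensorAlgebra k g) (g ⊗[k] TensorAlgebra k g)) := by
  simp [FB, fB]
  rfl

lemma FB_fst (u : TensorAlgebra k g) : (FB u).fst = u := by
  have : (TrivSqZeroExt.fstHom k (TensorAlgebra k g) (g ⊗[k] TensorAlgebra k g)).comp FB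
      = AlgHom.id k (TensorAlgebra k g) := by
    apply TensorAlgebra.hom_ext
    ext v
    simp
    rfl
  have h := DFunLike.congr_fun this u
  simpa using h

/-- the "extract one letter to the front, with sign" map. -/
noncomputable def ρ : TensorAlgebra k g →ₗ[k] g ⊗[k] TensorAlgebra k g where
  toFun u := (FB u).snd
  map_add' u v := by show (FB (u + v)).snd = (FB u).snd + (FB v).snd; rw [map_add]; rfl
  map_smul' c u := by
    show (FB (c • u)).snd = c • (FB u).snd
    rw [map_smul]
    rfl

@[simp] lemma ρ_ι (v : g) : ρ (TensorAlgebra.ι k v) = v ⊗ₜ[k] 1 := by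
  simp [ρ]

lemma ρ_mul (u v : TensorAlgebra k g) :
    ρ (u * v) = u • ρ v + (MulOpposite.op v) • ρ u := by
  have h := map_mul FB u v
  have h2 := congrArg TrivSqZeroExt.snd h
  rw [TrivSqZeroExt.snd_mul, FB_fst, FB_fst] at h2
  exact h2

end LeibnizAux

end Part1

section Part2
open scoped TensorProduct
namespace LeibnizAux

variable {k : Type*} [CommRing k] {g : Type*} [AddCommGroup g] [Module k g]

lemma pt_zero (x : Fin 0 → g) : pt k x = 1 := by simp [pt]

lemma pt_succ {n : ℕ} (x : Fin (n + 1) → g) :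
    pt k x = TensorAlgebra.ι k (x 0) * pt k (fun i : Fin n => x i.succ) := by
  rw [pt, List.ofFn_succ, List.prod_cons]; rfl

lemma pt_one (x : Fin 1 → g) : pt k x = TensorAlgebra.ι k (x 0) := by
  rw [pt_succ, pt_zero, mul_one]

lemma pt_snoc {n : ℕ} (x : Fin n → g) (y : g) :
    pt k (Fin.snoc x y) = pt k x * TensorAlgebra.ι k y := by
  rw [pt, List.ofFn_succ', List.concat_eq_append, List.prod_append, List.prod_cons,
    List.prod_nil, mul_one, pt]
  simp [Fin.snoc_castSucc]

lemma pt_cons {n : ℕ} (y : g) (x : Fin n → g) :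
    pt k (Fin.cons y x) = TensorAlgebra.ι k y * pt k x := by
  rw [pt_succ]
  simp [pt]

lemma pt_append {m n : ℕ} (x : Fin m → g) (z : Fin n → g) :
    pt k (Fin.append x z) = pt k x * pt k z := by
  rw [pt, List.ofFn_add, List.prod_append, pt, pt]
  simp [Fin.append_left, Fin.append_right]

lemma grev_pt {n : ℕ} (x : Fin n → g) :
    grev (pt k x) = ((-1 : k) ^ n) • pt k x := by
  induction n with
  | zero => rw [pt_zero]; simp
  | succ n ih =>
    rw [pt_succ, map_mul, grev_ι, ih]
    rw [neg_mul, mul_smul_comm, ← neg_smul, pow_succ]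
    congr 1
    ring

lemma mem_grade_pt {n : ℕ} (x : Fin n → g) : pt k x ∈ tensorGrade k g n :=
  Submodule.subset_span ⟨x, rfl⟩

lemma grev_grade {s : ℕ} {X : TensorAlgebra k g} (hX : X ∈ tensorGrade k g s) :
    grev X = ((-1 : k) ^ s) • X := by
  induction hX using Submodule.span_induction with
  | mem z hz => obtain ⟨x, rfl⟩ := hz; exact grev_pt x
  | zero => simp
  | add a b _ _ ha hb => rw [map_add, ha, hb, smul_add]
  | smul c a _ ha => rw [map_smul, ha, smul_comm]

lemma grade_mul_ι {s : ℕ} {X : TensorAlgebra k g} (hX : X ∈ tensorGrade k g s) (y : g) :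
    X * TensorAlgebra.ι k y ∈ tensorGrade k g (s + 1) := by
  induction hX using Submodule.span_induction with
  | mem z hz =>
    obtain ⟨x, rfl⟩ := hz
    exact Submodule.subset_span ⟨Fin.snoc x y, (pt_snoc x y).symm⟩
  | zero => rw [zero_mul]; exact Submodule.zero_mem _
  | add a b _ _ ha hb => rw [add_mul]; exact Submodule.add_mem _ ha hb
  | smul c a _ ha => rw [smul_mul_assoc]; exact Submodule.smul_mem _ _ ha

lemma grade_ι_mul {s : ℕ} {X : TensorAlgebra k g} (hX : X ∈ tensorGrade k g s) (y : g) :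
    TensorAlgebra.ι k y * X ∈ tensorGrade k g (s + 1) := by
  induction hX using Submodule.span_induction with
  | mem z hz =>
    obtain ⟨x, rfl⟩ := hz
    exact Submodule.subset_span ⟨Fin.cons y x, (pt_cons y x).symm⟩
  | zero => rw [mul_zero]; exact Submodule.zero_mem _
  | add a b _ _ ha hb => rw [mul_add]; exact Submodule.add_mem _ ha hb
  | smul c a _ ha => rw [mul_smul_comm]; exact Submodule.smul_mem _ _ ha

/-- prefix product before slot `i` -/
noncomputable def ptA {n : ℕ} (x : Fin n → g) (i : Fin n) : TensorAlgebra k g :=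
  ((List.ofFn fun a => TensorAlgebra.ι k (x a)).take i).prod

/-- suffix product after slot `i` -/
noncomputable def ptB {n : ℕ} (x : Fin n → g) (i : Fin n) : TensorAlgebra k g :=
  ((List.ofFn fun a => TensorAlgebra.ι k (x a)).drop (i + 1)).prod

lemma ofFn_update {α : Type*} {n : ℕ} (f : Fin n → α) (i : Fin n) (b : α) :
    List.ofFn (Function.update f i b) = (List.ofFn f).set i b := by
  apply List.ext_getElem
  · simp
  · intro j h1 h2
    have hj : j < n := by simpa using h1
    simp only [List.getElem_ofFn, List.getElem_set]
    by_cases hij : (i : ℕ) = j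
    · rw [if_pos hij, Function.update_apply, if_pos (Fin.ext hij.symm)]
    · rw [if_neg hij, Function.update_apply,
        if_neg (fun hcon => hij (by rw [← hcon]))]

lemma pt_update {n : ℕ} (x : Fin n → g) (i : Fin n) (v : g) :
    pt k (Function.update x i v) = ptA x i * TensorAlgebra.ι k v * ptB x i := by
  have hfun : (fun a => TensorAlgebra.ι k (Function.update x i v a))
      = Function.update (fun a => TensorAlgebra.ι k (x a)) i (TensorAlgebra.ι k v) := by
    funext a
    by_cases h : a = i
    · subst h; simp
    · rw [Function.update_of_ne h, Function.update_of_ne h]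
  rw [pt, hfun, ofFn_update, List.prod_set]
  have hlen : (i : ℕ) < (List.ofFn fun a => TensorAlgebra.ι k (x a)).length := by simp [i.isLt]
  rw [if_pos hlen]
  rfl

/-- the context-insertion map used for the cross terms -/
noncomputable def Ψ {n : ℕ} (mul : g →ₗ[k] g →ₗ[k] g) (x : Fin n → g) (i : Fin n) :
    (g ⊗[k] TensorAlgebra k g) →ₗ[k] TensorAlgebra k g :=
  TensorProduct.lift (LinearMap.mk₂ k
    (fun w m => ptA x i * TensorAlgebra.ι k (mul (x i) w) * ptB x i * m)
    (fun w w' m => by rw [map_add, map_add, mul_add, add_mul, add_mul])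
    (fun c w m => by
      rw [map_smul, map_smul, mul_smul_comm, smul_mul_assoc, smul_mul_assoc])
    (fun w m m' => by rw [mul_add])
    (fun c w m => by rw [mul_smul_comm]))

lemma Ψ_tmul {n : ℕ} (mul : g →ₗ[k] g →ₗ[k] g) (x : Fin n → g) (i : Fin n)
    (w : g) (m : TensorAlgebra k g) :
    Ψ mul x i (w ⊗ₜ[k] m) = pt k (Function.update x i (mul (x i) w)) * m := by
  rw [Ψ, TensorProduct.lift.tmul, pt_update]
  rfl

lemma Ψ_opsmul {n : ℕ} (mul : g →ₗ[k] g →ₗ[k] g) (x : Fin n → g) (i : Fin n)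
    (v : TensorAlgebra k g) (m : g ⊗[k] TensorAlgebra k g) :
    Ψ mul x i ((MulOpposite.op v) • m) = Ψ mul x i m * v := by
  induction m using TensorProduct.induction_on with
  | zero => rw [smul_zero, map_zero, zero_mul]
  | tmul w m0 =>
    rw [smulR_tmul, Ψ_tmul, Ψ_tmul, mul_assoc]
  | add a b ha hb => rw [smul_add, map_add, map_add, add_mul, ha, hb]

end LeibnizAux
end Part2

section Part3
open scoped TensorProduct
namespace LeibnizAux

variable {k : Type*} [CommRing k] {g : Type*} [AddCommGroup g] [Module k g]

lemma filter_castSucc_eq {m : ℕ} (j : Fin (m + 1)) :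
    (Finset.univ.filter (fun i : Fin (m + 1) => i.castSucc < j.castSucc))
      = (Finset.univ.filter (fun i : Fin m => i.castSucc < j)).map Fin.castSuccEmb := by
  ext a
  simp only [Finset.mem_filter, Finset.mem_univ, true_and, Finset.mem_map, Fin.lt_def,
    Fin.coe_castSucc]
  constructor
  · intro h
    have ham : (a : ℕ) < m := lt_of_lt_of_le h (Nat.lt_succ_iff.mp j.isLt)
    refine ⟨⟨(a : ℕ), ham⟩, h, ?_⟩
    apply Fin.ext
    simp [Fin.castSuccEmb]
  · rintro ⟨b, hb, rfl⟩
    simpa [Fin.castSuccEmb] using hb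

lemma sum_filter_lt_castSucc {M : Type*} [AddCommMonoid M] {m : ℕ} (j : Fin (m + 1))
    (f : Fin (m + 1) → M) :
    ∑ i ∈ Finset.univ.filter (fun i : Fin (m + 1) => i.castSucc < j.castSucc), f i
      = ∑ i ∈ Finset.univ.filter (fun i : Fin m => i.castSucc < j), f i.castSucc := by
  rw [filter_castSucc_eq, Finset.sum_map]
  rfl

lemma snoc_succAbove_castSucc {m : ℕ} (x : Fin (m + 1) → g) (y : g) (j : Fin (m + 1)) :
    (fun a : Fin (m + 1) => (Fin.snoc x y : Fin (m + 2) → g) ((Fin.castSucc j).succAbove a))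
      = Fin.snoc (fun a : Fin m => x (j.succAbove a)) y := by
  funext a
  induction a using Fin.lastCases with
  | last =>
    have h1 : (Fin.castSucc j).succAbove (Fin.last m) = Fin.last (m + 1) := by
      rw [Fin.succAbove_of_le_castSucc _ _ (by
        have hj := j.isLt
        simp only [Fin.le_def, Fin.coe_castSucc, Fin.val_last]
        omega), Fin.succ_last]
    rw [h1]
    exact (Fin.snoc_last _ _).trans
      (Fin.snoc_last (α := fun _ : Fin (m + 1) => g) y (fun a : Fin m => x (j.succAbove a))).symm
  | cast i =>
    rw [Fin.castSucc_succAbove_castSucc]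
    exact (Fin.snoc_castSucc _ _ _).trans
      (Fin.snoc_castSucc (α := fun _ : Fin (m + 1) => g) y
        (fun a : Fin m => x (j.succAbove a)) i).symm

variable (mul : g →ₗ[k] g →ₗ[k] g) (D : TensorAlgebra k g →ₗ[k] TensorAlgebra k g)

section
variable (hD : ∀ (m : ℕ) (x : Fin (m + 1) → g),
      D (pt k x) = ∑ j : Fin (m + 1),
        ∑ i ∈ Finset.univ.filter (fun i : Fin m => i.castSucc < j),
          ((-1 : k) ^ (j : ℕ)) •
            pt k (Function.update (fun a : Fin m => x (j.succAbove a)) i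
              (mul (x i.castSucc) (x j))))

include hD

lemma lemB (m : ℕ) (x : Fin (m + 1) → g) (y : g) :
    D (pt k x * TensorAlgebra.ι k y)
      = D (pt k x) * TensorAlgebra.ι k y
        + ((-1 : k) ^ (m + 1)) •
            ∑ i : Fin (m + 1), pt k (Function.update x i (mul (x i) y)) := by
  rw [← pt_snoc, hD (m + 1) (Fin.snoc x y), Fin.sum_univ_castSucc]
  congr 1
  · rw [hD m x, Finset.sum_mul]
    refine Finset.sum_congr rfl fun j _ => ?_
    rw [Finset.sum_mul, sum_filter_lt_castSucc]
    refine Finset.sum_congr rfl fun i hi => ?_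
    rw [snoc_succAbove_castSucc]
    have e1 : (Fin.snoc x y : Fin (m + 2) → g) i.castSucc.castSucc = x i.castSucc :=
      Fin.snoc_castSucc _ _ _
    have e2 : (Fin.snoc x y : Fin (m + 2) → g) j.castSucc = x j :=
      Fin.snoc_castSucc _ _ _
    rw [e1, e2, ← Fin.snoc_update, pt_snoc, Fin.coe_castSucc, smul_mul_assoc]
  · rw [Finset.filter_true_of_mem (fun i _ => Fin.castSucc_lt_last i), Finset.smul_sum]
    refine Finset.sum_congr rfl fun i _ => ?_
    rw [Fin.succAbove_last]
    have e0 : (fun a : Fin (m + 1) => (Fin.snoc x y : Fin (m + 2) → g) a.castSucc) = x := by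
      funext a
      exact Fin.snoc_castSucc _ _ _
    have e1 : (Fin.snoc x y : Fin (m + 2) → g) i.castSucc = x i :=
      Fin.snoc_castSucc _ _ _
    have e2 : (Fin.snoc x y : Fin (m + 2) → g) (Fin.last (m + 1)) = y :=
      Fin.snoc_last _ _
    rw [e0, e1, e2, Fin.val_last]

end
end LeibnizAux
end Part3

section Part4
open scoped TensorProduct
namespace LeibnizAux

variable {k : Type*} [CommRing k] {g : Type*} [AddCommGroup g] [Module k g]

lemma update_append_left {m n : ℕ} (x : Fin m → g) (z : Fin n → g) (i : Fin m) (v : g) :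
    Function.update (Fin.append x z) (Fin.castAdd n i) v
      = Fin.append (Function.update x i v) z := by
  funext a
  induction a using Fin.addCases with
  | left b =>
    rw [Fin.append_left, Function.update_apply, Function.update_apply]
    by_cases hbi : b = i
    · subst hbi; rw [if_pos rfl, if_pos rfl]
    · rw [if_neg (fun hc => hbi (by simpa [Fin.ext_iff] using hc)), if_neg hbi,
        Fin.append_left]
  | right b =>
    rw [Function.update_of_ne (by
      simp only [ne_eq, Fin.ext_iff, Fin.coe_natAdd, Fin.coe_castAdd]
      have := i.isLt
      omega), Fin.append_right, Fin.append_right]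

lemma update_append_right {m n : ℕ} (x : Fin m → g) (z : Fin n → g) (i : Fin n) (v : g) :
    Function.update (Fin.append x z) (Fin.natAdd m i) v
      = Fin.append x (Function.update z i v) := by
  funext a
  induction a using Fin.addCases with
  | left b =>
    rw [Function.update_of_ne (by
      simp only [ne_eq, Fin.ext_iff, Fin.coe_natAdd, Fin.coe_castAdd]
      have := b.isLt
      omega), Fin.append_left, Fin.append_left]
  | right b =>
    rw [Fin.append_right, Function.update_apply, Function.update_apply]
    by_cases hbi : b = i
    · subst hbi; rw [if_pos rfl, if_pos rfl]
    · rw [if_neg (fun hc => hbi (by simpa [Fin.ext_iff] using hc)), if_neg hbi,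
        Fin.append_right]

variable (mul : g →ₗ[k] g →ₗ[k] g) (D : TensorAlgebra k g →ₗ[k] TensorAlgebra k g)

section
variable (hD : ∀ (m : ℕ) (x : Fin (m + 1) → g),
      D (pt k x) = ∑ j : Fin (m + 1),
        ∑ i ∈ Finset.univ.filter (fun i : Fin m => i.castSucc < j),
          ((-1 : k) ^ (j : ℕ)) •
            pt k (Function.update (fun a : Fin m => x (j.succAbove a)) i
              (mul (x i.castSucc) (x j))))

include hD

lemma lemBapp (p q : ℕ) (x : Fin (p + 1) → g) (z : Fin (q + 1) → g) (y : g) :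
    D ((pt k x * pt k z) * TensorAlgebra.ι k y)
      = D (pt k x * pt k z) * TensorAlgebra.ι k y
        + ((-1 : k) ^ (p + q + 2)) •
            ((∑ i : Fin (p + 1), pt k (Function.update x i (mul (x i) y)) * pt k z)
              + ∑ i : Fin (q + 1), pt k x * pt k (Function.update z i (mul (z i) y))) := by
  have h := lemB mul D hD (p + 1 + q) (Fin.append (m := p + 1) (n := q + 1) x z) y
  rw [pt_append] at h
  rw [h]
  congr 1
  rw [show ((-1 : k) ^ (p + q + 2)) = (-1 : k) ^ (p + 1 + q + 1) from by ring_nf]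
  congr 1
  refine Eq.trans (Fin.sum_univ_add (a := p + 1) (b := q + 1)
    (fun i => pt k (Function.update (Fin.append x z) i (mul (Fin.append x z i) y)))) ?_
  congr 1
  · refine Finset.sum_congr rfl fun i _ => ?_
    rw [Fin.append_left, update_append_left, pt_append]
  · refine Finset.sum_congr rfl fun i _ => ?_
    rw [Fin.append_right, update_append_right, pt_append]

end
end LeibnizAux
end Part4

section Part5
open scoped TensorProduct
namespace LeibnizAux

variable {k : Type*} [CommRing k] {g : Type*} [AddCommGroup g] [Module k g]

variable (mul : g →ₗ[k] g →ₗ[k] g) (D : TensorAlgebra k g →ₗ[k] TensorAlgebra k g)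

section
variable (hD : ∀ (m : ℕ) (x : Fin (m + 1) → g),
      D (pt k x) = ∑ j : Fin (m + 1),
        ∑ i ∈ Finset.univ.filter (fun i : Fin m => i.castSucc < j),
          ((-1 : k) ^ (j : ℕ)) •
            pt k (Function.update (fun a : Fin m => x (j.succAbove a)) i
              (mul (x i.castSucc) (x j))))

include hD

lemma lemC : ∀ (q : ℕ) (z : Fin (q + 1) → g) (p : ℕ) (x : Fin (p + 1) → g),
    D (pt k x * pt k z)
      = D (pt k x) * pt k z + ((-1 : k) ^ (p + 1)) • (pt k x * D (pt k z))
        + ((-1 : k) ^ (p + 1)) • ∑ i : Fin (p + 1), Ψ mul x i (ρ (pt k z)) := by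
  intro q
  induction q with
  | zero =>
    intro z p x
    have h0 : D (TensorAlgebra.ι k (z 0)) = 0 := by
      have h := hD 0 z
      rw [pt_one z] at h
      simpa using h
    rw [pt_one z, lemB mul D hD p x (z 0), h0, mul_zero, smul_zero, add_zero]
    congr 2
    refine Finset.sum_congr rfl fun i _ => ?_
    rw [ρ_ι, Ψ_tmul, mul_one]
  | succ q ih =>
    intro z p x
    rw [← Fin.snoc_init_self z]
    set z' : Fin (q + 1) → g := Fin.init z with hz'
    set y : g := z (Fin.last (q + 1)) with hy
    rw [pt_snoc]
    have hBz : D (pt k z' * TensorAlgebra.ι k y)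
        = D (pt k z') * TensorAlgebra.ι k y + ((-1 : k) ^ (q + 1)) •
            ∑ i : Fin (q + 1), pt k (Function.update z' i (mul (z' i) y)) :=
      lemB mul D hD q z' y
    have hρz : ρ (pt k z' * TensorAlgebra.ι k y)
        = ((-1 : k) ^ (q + 1)) • (y ⊗ₜ[k] pt k z')
          + (MulOpposite.op (TensorAlgebra.ι k y)) • ρ (pt k z') := by
      rw [ρ_mul, ρ_ι, smulL_tmul, mul_one, grev_pt, TensorProduct.tmul_smul]
    have hΨ : ∀ i : Fin (p + 1), Ψ mul x i (ρ (pt k z' * TensorAlgebra.ι k y))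
        = ((-1 : k) ^ (q + 1)) • (pt k (Function.update x i (mul (x i) y)) * pt k z')
          + Ψ mul x i (ρ (pt k z')) * TensorAlgebra.ι k y := by
      intro i
      rw [hρz, map_add, LinearMap.map_smul, Ψ_tmul, Ψ_opsmul]
    have hL : D (pt k x * (pt k z' * TensorAlgebra.ι k y))
        = D (pt k x * pt k z') * TensorAlgebra.ι k y
          + ((-1 : k) ^ (p + q + 2)) •
              ((∑ i : Fin (p + 1), pt k (Function.update x i (mul (x i) y)) * pt k z')
                + ∑ i : Fin (q + 1), pt k x * pt k (Function.update z' i (mul (z' i) y))) := by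
      rw [← mul_assoc]
      exact lemBapp mul D hD p q x z' y
    have hΨsum : ∑ i : Fin (p + 1), Ψ mul x i (ρ (pt k z' * TensorAlgebra.ι k y))
        = ((-1 : k) ^ (q + 1)) •
            (∑ i : Fin (p + 1), pt k (Function.update x i (mul (x i) y)) * pt k z')
          + (∑ i : Fin (p + 1), Ψ mul x i (ρ (pt k z'))) * TensorAlgebra.ι k y := by
      rw [Finset.smul_sum, Finset.sum_mul, ← Finset.sum_add_distrib]
      exact Finset.sum_congr rfl fun i _ => hΨ i
    rw [hL, ih z' p x, hBz, hΨsum, ← Finset.mul_sum]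
    rw [show ((-1 : k) ^ (p + q + 2)) = (-1 : k) ^ (p + 1) * (-1 : k) ^ (q + 1) from by
      rw [← pow_add]; ring_nf]
    simp only [add_mul, smul_mul_assoc, mul_add, mul_smul_comm, smul_add, smul_smul, mul_assoc]
    module

end
end LeibnizAux
end Part5

section Part6
open scoped TensorProduct
namespace LeibnizAux

variable {k : Type*} [CommRing k] {g : Type*} [AddCommGroup g] [Module k g]

section Lpart
variable (L : ℕ → Submodule k (TensorAlgebra k g))
  (hL1 : L 1 = tensorGrade k g 1)
  (hLsucc : ∀ n : ℕ, 1 ≤ n → L (n + 1) =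
      Submodule.span k {z | ∃ X ∈ L n, ∃ y : g,
        z = X * TensorAlgebra.ι k y - ((-1 : k) ^ n) • (TensorAlgebra.ι k y * X)})

include hL1 hLsucc

lemma L_sub_grade : ∀ s : ℕ, ∀ Y ∈ L (s + 1), Y ∈ tensorGrade k g (s + 1) := by
  intro s
  induction s with
  | zero => intro Y hY; rwa [hL1] at hY
  | succ s ih =>
    intro Y hY
    rw [hLsucc (s + 1) (by omega)] at hY
    refine Submodule.span_le.mpr ?_ hY
    rintro z ⟨Z, hZ, y, rfl⟩
    exact Submodule.sub_mem _ (grade_mul_ι (ih Z hZ) y)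
      (Submodule.smul_mem _ _ (grade_ι_mul (ih Z hZ) y))

lemma rho_L : ∀ s : ℕ, ∀ Y ∈ L (s + 2), ρ Y = 0 := by
  intro s
  induction s with
  | zero =>
    intro Y hY
    rw [hLsucc 1 le_rfl] at hY
    induction hY using Submodule.span_induction with
    | mem z hz =>
      obtain ⟨Z, hZ, y, rfl⟩ := hz
      rw [hL1] at hZ
      induction hZ using Submodule.span_induction with
      | mem w hw =>
        obtain ⟨a, rfl⟩ := hw
        rw [pt_one]
        rw [map_sub, LinearMap.map_smul, ρ_mul, ρ_mul]
        simp only [ρ_ι, smulL_tmul, smulR_tmul, grev_ι, mul_one, one_mul, pow_one,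
          neg_mul, TensorProduct.tmul_neg, neg_smul, one_smul, neg_neg]
        abel
      | zero =>
        rw [zero_mul, mul_zero, smul_zero, sub_zero, map_zero]
      | add Z W hZm hWm hZe hWe =>
        have hE : (Z + W) * TensorAlgebra.ι k y
              - ((-1 : k) ^ 1) • (TensorAlgebra.ι k y * (Z + W))
            = (Z * TensorAlgebra.ι k y - ((-1 : k) ^ 1) • (TensorAlgebra.ι k y * Z))
              + (W * TensorAlgebra.ι k y - ((-1 : k) ^ 1) • (TensorAlgebra.ι k y * W)) := by
          rw [add_mul, mul_add, smul_add]
          abel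
        rw [hE, map_add, hZe, hWe, add_zero]
      | smul c Z hZm hZe =>
        have hE : (c • Z) * TensorAlgebra.ι k y
              - ((-1 : k) ^ 1) • (TensorAlgebra.ι k y * (c • Z))
            = c • (Z * TensorAlgebra.ι k y - ((-1 : k) ^ 1) • (TensorAlgebra.ι k y * Z)) := by
          rw [smul_mul_assoc, mul_smul_comm, smul_sub, smul_comm c]
        rw [hE, LinearMap.map_smul, hZe, smul_zero]
    | zero => exact map_zero ρ
    | add a b _ _ ha hb => rw [map_add, ha, hb, add_zero]
    | smul c a _ ha => rw [LinearMap.map_smul, ha, smul_zero]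
  | succ s ih =>
    intro Y hY
    rw [hLsucc (s + 2) (by omega)] at hY
    induction hY using Submodule.span_induction with
    | mem z hz =>
      obtain ⟨Z, hZ, y, rfl⟩ := hz
      have h1 : ρ Z = 0 := ih Z hZ
      have h2 : grev Z = ((-1 : k) ^ (s + 2)) • Z :=
        grev_grade (L_sub_grade L hL1 hLsucc (s + 1) Z hZ)
      rw [map_sub, LinearMap.map_smul, ρ_mul, ρ_mul, h1, ρ_ι]
      simp only [smul_zero, add_zero, zero_add, smulL_tmul, smulR_tmul, mul_one, one_mul,
        h2, TensorProduct.tmul_smul, sub_self]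
    | zero => exact map_zero ρ
    | add a b _ _ ha hb => rw [map_add, ha, hb, add_zero]
    | smul c a _ ha => rw [LinearMap.map_smul, ha, smul_zero]

end Lpart
end LeibnizAux
end Part6

/-- for a (right) Leibniz algebra `g` over a field `k` of characteristic zero,
`n ≥ 1`, `t ≥ 2`, `X ∈ g^{⊗n}` and `Y ∈ L_t`, the Leibniz differential satisfies
`d(X⊗Y) = (dX)⊗Y + (−1)ⁿ X⊗(dY)` (below `n, t` of the statement are `n+1, t+2`). -/
theorem leibniz_differential_primitive_factor
    {k : Type*} [Field k] [CharZero k]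
    {g : Type*} [AddCommGroup g] [Module k g]
    (mul : g →ₗ[k] g →ₗ[k] g)
    (hleib : ∀ x y z : g, mul x (mul y z) = mul (mul x y) z - mul (mul x z) y)
    (D : TensorAlgebra k g →ₗ[k] TensorAlgebra k g)
    (hD : ∀ (m : ℕ) (x : Fin (m + 1) → g),
      D (pt k x) = ∑ j : Fin (m + 1),
        ∑ i ∈ Finset.univ.filter (fun i : Fin m => i.castSucc < j),
          ((-1 : k) ^ (j : ℕ)) •
            pt k (Function.update (fun a : Fin m => x (j.succAbove a)) i
              (mul (x i.castSucc) (x j))))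
    (L : ℕ → Submodule k (TensorAlgebra k g))
    (hL1 : L 1 = tensorGrade k g 1)
    (hLsucc : ∀ n : ℕ, 1 ≤ n → L (n + 1) =
      Submodule.span k {z | ∃ X ∈ L n, ∃ y : g,
        z = X * TensorAlgebra.ι k y - ((-1 : k) ^ n) • (TensorAlgebra.ι k y * X)})
    (n t : ℕ) (X : TensorAlgebra k g) (hX : X ∈ tensorGrade k g (n + 1))
    (Y : TensorAlgebra k g) (hY : Y ∈ L (t + 2)) :
    D (X * Y) = D X * Y + ((-1 : k) ^ (n + 1)) • (X * D Y) := by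
  have hYg : Y ∈ tensorGrade k g (t + 2) :=
    LeibnizAux.L_sub_grade L hL1 hLsucc (t + 1) Y hY
  have hρY : LeibnizAux.ρ Y = 0 := LeibnizAux.rho_L L hL1 hLsucc t Y hY
  induction hX using Submodule.span_induction with
  | mem X0 hX0 =>
    obtain ⟨x, rfl⟩ := hX0
    have key : ∀ Y', Y' ∈ tensorGrade k g (t + 2) →
        D (pt k x * Y') = D (pt k x) * Y' + ((-1 : k) ^ (n + 1)) • (pt k x * D Y')
          + ((-1 : k) ^ (n + 1)) •
              ∑ i : Fin (n + 1), LeibnizAux.Ψ mul x i (LeibnizAux.ρ Y') := by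
      intro Y' hY'
      induction hY' using Submodule.span_induction with
      | mem z hz =>
        obtain ⟨zz, rfl⟩ := hz
        exact LeibnizAux.lemC mul D hD (t + 1) zz n x
      | zero => simp
      | add a b _ _ ha hb =>
        rw [mul_add, map_add, ha, hb]
        simp only [map_add, mul_add, add_mul, smul_add, Finset.sum_add_distrib]
        abel
      | smul c a _ ha =>
        rw [mul_smul_comm, map_smul, ha]
        simp only [map_smul, LinearMap.map_smul, mul_smul_comm, smul_add, smul_smul,
          ← Finset.smul_sum]
        module
    have h := key Y hYg
    rw [hρY] at h
    simpa using h
  | zero => simp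
  | add a b _ _ ha hb =>
    rw [add_mul, map_add, ha, hb]
    simp only [map_add, add_mul, smul_add]
    abel
  | smul c a _ ha =>
    rw [smul_mul_assoc, map_smul, ha]
    simp only [map_smul, smul_mul_assoc, smul_add, smul_smul]
    module
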